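/- Let λ > 1 be a real number and let f : ℝ² → ℝ be real-analytic in a neighborhood of the origin such that f(λ·x/(1+y), y/(1+y)) = f(x,y) for all (x,y) in a neighborhood of (0,0). Then f is constant in a neighborhood of (0,0). (A real-analytic local first integral of the map φ(x,y) = (λx/(1+y), y/(1+y)), which is the non-diagonalizable/unipotent case of a hyperbolic projective automorphism fixing the origin, is constant; the formal first integrals (x/y)·exp(−log(λ)/y) of this map are not real-analytic at the origin.) -/

import Mathlib

open Filter

private lemma key15 (l : ℝ) (hl : 1 < l) (f : ℝ × ℝ → ℝ)
    (hcont : ContinuousAt f 0) (ε : ℝ)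
    (hinv : ∀ z : ℝ × ℝ, ‖z‖ < ε → f (l * z.1 / (1 + z.2), z.2 / (1 + z.2)) = f z)
    (x y : ℝ) (hxy : ‖((x, y) : ℝ × ℝ)‖ < ε) (hy : y ≤ 0) : f (x, y) = f 0 := by
  have hl0 : (0:ℝ) < l := lt_trans one_pos hl
  set g : ℕ → ℝ × ℝ := fun n => (x / (l ^ n * (1 - n * y)), y / (1 - n * y)) with hg
  have hden : ∀ n : ℕ, (1:ℝ) ≤ 1 - n * y := by
    intro n
    nlinarith [Nat.cast_nonneg (α := ℝ) n]
  have hpow : ∀ n : ℕ, (1:ℝ) ≤ l ^ n := fun n => one_le_pow₀ hl.le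
  have hd1 : ∀ n : ℕ, (1:ℝ) ≤ l ^ n * (1 - n * y) := by
    intro n; nlinarith [hden n, hpow n]
  have hxn : max |x| |y| < ε := by
    simpa [Prod.norm_def, Real.norm_eq_abs] using hxy
  have hnorm : ∀ n : ℕ, ‖g n‖ < ε := by
    intro n
    have h1 : |x / (l ^ n * (1 - n * y))| ≤ |x| := by
      rw [abs_div]
      exact (div_le_self (abs_nonneg x) ((hd1 n).trans (le_abs_self _)))
    have h2 : |y / (1 - n * y)| ≤ |y| := by
      rw [abs_div]
      exact (div_le_self (abs_nonneg y) ((hden n).trans (le_abs_self _)))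
    have hgn : ‖g n‖ = max |x / (l ^ n * (1 - n * y))| |y / (1 - n * y)| := by
      simp only [hg, Prod.norm_def, Real.norm_eq_abs]
    rw [hgn]
    exact lt_of_le_of_lt (max_le_max h1 h2) hxn
  have hconst : ∀ n : ℕ, f (g n) = f (x, y) := by
    intro n
    induction n with
    | zero => simp [hg]
    | succ n ih =>
      rw [← ih]
      have ha : (0:ℝ) < 1 - n * y := lt_of_lt_of_le one_pos (hden n)
      have hb : (0:ℝ) < 1 - ((n:ℝ) + 1) * y := by
        have := hden (n + 1); push_cast at this; linarith
      have ha0 : (1:ℝ) - n * y ≠ 0 := ne_of_gt ha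
      have hb0 : (1:ℝ) - ((n:ℝ) + 1) * y ≠ 0 := ne_of_gt hb
      have hln0 : l ^ n ≠ 0 := ne_of_gt (pow_pos hl0 n)
      have hl0' : l ≠ 0 := ne_of_gt hl0
      have hsnd : (g (n + 1)).2 = y / (1 - ((n:ℝ) + 1) * y) := by
        simp only [hg]; push_cast; ring_nf
      have hfst : (g (n + 1)).1 = x / (l ^ (n + 1) * (1 - ((n:ℝ) + 1) * y)) := by
        simp only [hg]; push_cast; ring_nf
      have hsum : 1 + (g (n + 1)).2 = (1 - n * y) / (1 - ((n:ℝ) + 1) * y) := by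
        rw [hsnd]
        rw [eq_div_iff hb0, add_mul, div_mul_cancel₀ _ hb0]
        ring
      have heq : (l * (g (n + 1)).1 / (1 + (g (n + 1)).2),
          (g (n + 1)).2 / (1 + (g (n + 1)).2)) = g n := by
        apply Prod.ext
        · show l * (g (n + 1)).1 / (1 + (g (n + 1)).2) = x / (l ^ n * (1 - n * y))
          rw [hsum, hfst, pow_succ]
          field_simp
        · show (g (n + 1)).2 / (1 + (g (n + 1)).2) = y / (1 - n * y)
          rw [hsum, hsnd]
          field_simp
          rw [div_eq_div_iff (mul_ne_zero (ne_of_gt (by linarith)) (ne_of_gt (by linarith))) (ne_of_gt (by linarith))]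
          ring
      rw [← heq]
      exact (hinv (g (n + 1)) (hnorm (n + 1))).symm
  -- g n → 0
  have hgto : Filter.Tendsto g atTop (nhds 0) := by
    have h1 : Filter.Tendsto (fun n : ℕ => x / (l ^ n * (1 - n * y))) atTop (nhds 0) := by
      have hbd : ∀ n : ℕ, ‖x / (l ^ n * (1 - n * y))‖ ≤ |x| / l ^ n := by
        intro n
        rw [Real.norm_eq_abs, abs_div]
        have h3 : (0:ℝ) < l ^ n := pow_pos hl0 n
        have habs : |l ^ n * (1 - n * y)| = l ^ n * (1 - n * y) := by
          rw [abs_of_pos]; nlinarith [hden n]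
        rw [habs]
        apply div_le_div_of_nonneg_left (abs_nonneg x) h3
        nlinarith [hden n]
      have htend : Filter.Tendsto (fun n : ℕ => |x| / l ^ n) atTop (nhds 0) := by
        have hinvpow := tendsto_pow_atTop_nhds_zero_of_lt_one
          (le_of_lt (inv_pos.mpr hl0)) (by rw [inv_lt_one_iff₀]; right; exact hl)
        have h4 : Filter.Tendsto (fun n : ℕ => |x| * (l⁻¹) ^ n) atTop (nhds (|x| * 0)) :=
          Filter.Tendsto.const_mul _ hinvpow
        simpa [div_eq_mul_inv, inv_pow] using h4
      exact squeeze_zero_norm hbd htend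
    have h2 : Filter.Tendsto (fun n : ℕ => y / (1 - n * y)) atTop (nhds 0) := by
      rcases eq_or_lt_of_le hy with h | h
      · rw [h]; simp
      · have hto : Filter.Tendsto (fun n : ℕ => 1 - n * y) atTop atTop := by
          have hmy : (0:ℝ) < -y := by linarith
          have h0 : Filter.Tendsto (fun n : ℕ => (n:ℝ) * (-y) + 1) atTop atTop :=
            Filter.tendsto_atTop_add_const_right _ 1
              (Filter.Tendsto.atTop_mul_const hmy tendsto_natCast_atTop_atTop)
          have hfe : (fun n : ℕ => 1 - (n:ℝ) * y) = fun n : ℕ => (n:ℝ) * (-y) + 1 := by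
            funext n; ring
          rw [hfe]; exact h0
        have h5 : Filter.Tendsto (fun n : ℕ => y * (1 - n * y)⁻¹) atTop (nhds (y * 0)) :=
          Filter.Tendsto.const_mul _ hto.inv_tendsto_atTop
        simpa [div_eq_mul_inv] using h5
    have : Filter.Tendsto g atTop (nhds (0, 0)) := Filter.Tendsto.prodMk_nhds h1 h2
    simpa [Prod.mk_zero_zero] using this
  have hcomp : Filter.Tendsto (fun n => f (g n)) atTop (nhds (f 0)) := hcont.tendsto.comp hgto
  have h6 : Filter.Tendsto (fun _ : ℕ => f (x, y)) atTop (nhds (f 0)) := by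
    simpa [hconst] using hcomp
  exact tendsto_nhds_unique tendsto_const_nhds h6

theorem stmt15 (l : ℝ) (hl : 1 < l)
    (f : ℝ × ℝ → ℝ) (hf : AnalyticAt ℝ f 0)
    (hinv : ∀ᶠ z : ℝ × ℝ in nhds 0,
      f (l * z.1 / (1 + z.2), z.2 / (1 + z.2)) = f z) :
    ∀ᶠ z : ℝ × ℝ in nhds 0, f z = f 0 := by
  obtain ⟨r₀, hr₀, han⟩ := hf.exists_ball_analyticOnNhd
  obtain ⟨ε, hε, hball⟩ := Metric.eventually_nhds_iff_ball.mp hinv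
  set r := min r₀ ε with hr
  have hrpos : 0 < r := lt_min hr₀ hε
  have hinv' : ∀ z : ℝ × ℝ, ‖z‖ < ε → f (l * z.1 / (1 + z.2), z.2 / (1 + z.2)) = f z := by
    intro z hz
    apply hball
    simpa [Metric.mem_ball, dist_zero_right] using hz
  have hcont : ContinuousAt f 0 := hf.continuousAt
  -- f is constant on a small ball around p = (0, -r/2)
  set p : ℝ × ℝ := (0, -r/2) with hp
  have hnp : ‖p‖ = r / 2 := by
    simp only [hp, Prod.norm_def, Real.norm_eq_abs, abs_zero]
    rw [abs_of_nonpos (by linarith), max_eq_right (by linarith)]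
    ring
  have hpball : p ∈ Metric.ball (0 : ℝ × ℝ) r₀ := by
    rw [Metric.mem_ball, dist_zero_right, hnp]
    have : r ≤ r₀ := min_le_left _ _
    linarith
  have hev : f =ᶠ[nhds p] (fun _ => f 0) := by
    filter_upwards [Metric.ball_mem_nhds p (by linarith : (0:ℝ) < r/4)] with w hw
    rw [Metric.mem_ball] at hw
    have hd2 : |w.2 - (-r/2)| < r/4 := by
      have h := (le_max_right (dist w.1 p.1) (dist w.2 p.2)).trans_lt (by rwa [← Prod.dist_eq])
      simpa [hp, Real.dist_eq] using h
    have hy : w.2 ≤ 0 := by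
      rcases abs_lt.mp hd2 with ⟨_, h2⟩
      linarith
    have hwnorm : ‖w‖ < ε := by
      have h1 : ‖w - p‖ < r/4 := by rwa [← dist_eq_norm]
      have h2 : ‖w‖ ≤ ‖w - p‖ + ‖p‖ := by
        calc ‖w‖ = ‖(w - p) + p‖ := by rw [sub_add_cancel]
          _ ≤ ‖w - p‖ + ‖p‖ := norm_add_le _ _
      have : r ≤ ε := min_le_right _ _
      rw [hnp] at h2
      linarith
    have := key15 l hl f hcont ε hinv' w.1 w.2 (by simpa using hwnorm) hy
    simpa using this
  have : Set.EqOn f (fun _ => f 0) (Metric.ball (0 : ℝ × ℝ) r₀) :=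
    han.eqOn_of_preconnected_of_eventuallyEq (analyticOnNhd_const)
      (convex_ball (0 : ℝ × ℝ) r₀).isPreconnected hpball hev
  filter_upwards [Metric.ball_mem_nhds (0 : ℝ × ℝ) hr₀] with z hz
  exact this hz
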